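/- Let B ⊆ ℝ^d with |B| = d+1 be proper d-dimensional, let k be a positive integer, and let A_1 ⊆ B be a subset with |A_1| = m_1. Then |A_1 + kB| = C(d+k+1, k+1) − C(d − m_1 + k + 1, k+1). -/

import Mathlib

open Pointwise

/-- The `k`-fold sumset `B + B + ⋯ + B` (`k` summands). -/
def kfoldSumset {α : Type*} [AddCommMonoid α] [DecidableEq α]
    (k : ℕ) (B : Finset α) : Finset α :=
  ∑ _i ∈ Finset.range k, B

lemma mem_kfoldSumset {α : Type*} [AddCommMonoid α] [DecidableEq α]
    {B : Finset α} {k : ℕ} {x : α} :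
    x ∈ kfoldSumset k B ↔
      ∃ m : Multiset α, Multiset.card m = k ∧ (∀ b ∈ m, b ∈ B) ∧ m.sum = x := by
  induction k generalizing x with
  | zero =>
    simp only [kfoldSumset, Finset.range_zero, Finset.sum_empty, Finset.mem_zero]
    constructor
    · rintro rfl
      exact ⟨0, rfl, by simp, rfl⟩
    · rintro ⟨m, hm, -, rfl⟩
      rw [Multiset.card_eq_zero] at hm
      simp [hm]
  | succ k ih =>
    have hstep : kfoldSumset (k + 1) B = kfoldSumset k B + B :=
      Finset.sum_range_succ (fun _ => B) k
    rw [hstep]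
    rw [Finset.mem_add]
    constructor
    · rintro ⟨y, hy, b, hb, rfl⟩
      obtain ⟨m, hmc, hmB, rfl⟩ := ih.1 hy
      exact ⟨b ::ₘ m, by simp [hmc], by
        intro a ha
        rcases Multiset.mem_cons.1 ha with rfl | ha
        · exact hb
        · exact hmB a ha, by simp [add_comm]⟩
    · rintro ⟨m, hmc, hmB, rfl⟩
      have hm0 : m ≠ 0 := by
        intro h; rw [h] at hmc; simp at hmc
      obtain ⟨b, hb⟩ := Multiset.exists_mem_of_ne_zero hm0
      have hme : m = b ::ₘ m.erase b := (Multiset.cons_erase hb).symm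
      refine ⟨(m.erase b).sum, ih.2 ⟨m.erase b, ?_, ?_, rfl⟩, b, hmB b hb, ?_⟩
      · rw [Multiset.card_erase_of_mem hb, hmc]; rfl
      · exact fun a ha => hmB a (Multiset.mem_of_mem_erase ha)
      · rw [hme]; simp [add_comm]

lemma multiset_sum_eq_sum_count_smul {d : ℕ} {B : Finset (Fin d → ℝ)}
    {M : Multiset (Fin d → ℝ)} (h : ∀ a ∈ M, a ∈ B) :
    ∑ b ∈ B, (M.count b : ℝ) • b = M.sum := by
  have h1 : M.sum = ∑ b ∈ M.toFinset, M.count b • b := by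
    simpa using Finset.sum_multiset_map_count M id
  have hsub : M.toFinset ⊆ B := fun a ha => h a (Multiset.mem_toFinset.1 ha)
  have h2 : ∑ b ∈ B, M.count b • b = ∑ b ∈ M.toFinset, M.count b • b := by
    refine (Finset.sum_subset hsub ?_).symm
    intro b _ hb
    rw [Multiset.count_eq_zero_of_notMem (fun hmem => hb (Multiset.mem_toFinset.2 hmem))]
    simp
  rw [h1, ← h2]
  exact Finset.sum_congr rfl fun b _ => Nat.cast_smul_eq_nsmul ℝ _ _

lemma multiset_card_eq_sum_count {α : Type*} [DecidableEq α] {B : Finset α}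
    {M : Multiset α} (h : ∀ a ∈ M, a ∈ B) :
    ∑ b ∈ B, M.count b = Multiset.card M := by
  rw [← Multiset.toFinset_sum_count_eq M]
  refine (Finset.sum_subset (fun a ha => h a (Multiset.mem_toFinset.1 ha)) ?_).symm
  intro b _ hb
  exact Multiset.count_eq_zero_of_notMem (fun hmem => hb (Multiset.mem_toFinset.2 hmem))

lemma card_finset_sym {α : Type*} [DecidableEq α] (s : Finset α) (n : ℕ) :
    (s.sym n).card = (s.card + n - 1).choose n := by
  classical
  have himg : s.sym n = Finset.univ.image (Sym.map ((↑) : {x // x ∈ s} → α)) := by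
    ext m
    simp only [Finset.mem_sym_iff, Finset.mem_image, Finset.mem_univ, true_and]
    constructor
    · intro hm
      refine ⟨(m.attach).map (fun x => (⟨x.1, hm x.1 x.2⟩ : {x // x ∈ s})), ?_⟩
      rw [Sym.map_map]
      exact Sym.attach_map_coe m
    · rintro ⟨m', rfl⟩ a ha
      obtain ⟨b, -, rfl⟩ := Sym.mem_map.1 ha
      exact b.2
  rw [himg, Finset.card_image_of_injective _ (Sym.map_injective Subtype.coe_injective n),
    Finset.card_univ, Sym.card_sym_eq_choose, Fintype.card_coe]

theorem subset_of_simplex_vertices_sumset_card (d k m₁ : ℕ) (hk : 0 < k)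
    (B A₁ : Finset (Fin d → ℝ)) (hB : B.card = d + 1)
    (hBspan : affineSpan ℝ (B : Set (Fin d → ℝ)) = ⊤)
    (hA₁ : A₁ ⊆ B) (hm₁ : A₁.card = m₁) :
    ((A₁ + kfoldSumset k B).card : ℤ)
      = (d + k + 1).choose (k + 1) - ((d + k + 1 - m₁).choose (k + 1)) := by
  classical
  -- B is affinely independent
  have hcard : Fintype.card {x // x ∈ B} = d + 1 := by rw [Fintype.card_coe, hB]
  have hind : AffineIndependent ℝ ((↑) : {x // x ∈ B} → (Fin d → ℝ)) := by
    rw [affineIndependent_iff_finrank_vectorSpan_eq ℝ _ hcard]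
    have hr : Set.range ((↑) : {x // x ∈ B} → (Fin d → ℝ)) = (B : Set (Fin d → ℝ)) :=
      Subtype.range_coe
    rw [hr, ← direction_affineSpan, hBspan, AffineSubspace.direction_top, finrank_top]
    simp
  set n := k + 1 with hn
  set f : Sym (Fin d → ℝ) n → (Fin d → ℝ) := fun m => (m : Multiset (Fin d → ℝ)).sum with hf
  -- injectivity of f on B.sym n
  have hinj : Set.InjOn f (B.sym n) := by
    intro m hm m' hm' hsum
    rw [Finset.mem_coe, Finset.mem_sym_iff] at hm hm'
    have hmB : ∀ a ∈ (m : Multiset (Fin d → ℝ)), a ∈ B := fun a h => hm a h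
    have hm'B : ∀ a ∈ (m' : Multiset (Fin d → ℝ)), a ∈ B := fun a h => hm' a h
    have hsum1 : ∀ (M : Sym (Fin d → ℝ) n), (∀ a ∈ (M : Multiset (Fin d → ℝ)), a ∈ B) →
        ∑ e : {x // x ∈ B}, ((M : Multiset (Fin d → ℝ)).count ↑e : ℝ) = (n : ℝ) := by
      intro M hM
      rw [Finset.sum_coe_sort
        (f := fun b => (((M : Multiset (Fin d → ℝ)).count b : ℕ) : ℝ)) (s := B)]
      rw [← Nat.cast_sum, multiset_card_eq_sum_count hM, Sym.card_coe]
    have hsum2 : ∀ (M : Sym (Fin d → ℝ) n), (∀ a ∈ (M : Multiset (Fin d → ℝ)), a ∈ B) →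
        ∑ e : {x // x ∈ B}, ((M : Multiset (Fin d → ℝ)).count ↑e : ℝ) • (e : Fin d → ℝ)
          = (M : Multiset (Fin d → ℝ)).sum := by
      intro M hM
      rw [Finset.sum_coe_sort
        (f := fun b => (((M : Multiset (Fin d → ℝ)).count b : ℕ) : ℝ) • b) (s := B)]
      exact multiset_sum_eq_sum_count_smul hM
    have hw := hind.eq_of_sum_eq_sum
      (w₁ := fun e => ((m : Multiset (Fin d → ℝ)).count ↑e : ℝ))
      (w₂ := fun e => ((m' : Multiset (Fin d → ℝ)).count ↑e : ℝ))
      (s := Finset.univ)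
      (by rw [hsum1 m hmB, hsum1 m' hm'B])
      (by rw [hsum2 m hmB, hsum2 m' hm'B]; exact hsum)
    apply Sym.coe_injective
    ext a
    by_cases ha : a ∈ B
    · have h := hw ⟨a, ha⟩ (Finset.mem_univ _)
      simp only [Nat.cast_inj] at h
      exact h
    · rw [Multiset.count_eq_zero_of_notMem (fun h => ha (hmB a h)),
        Multiset.count_eq_zero_of_notMem (fun h => ha (hm'B a h))]
  -- characterization of membership in A₁ + kB
  have hchar : ∀ x, x ∈ A₁ + kfoldSumset k B ↔
      ∃ m ∈ B.sym n, (∃ a ∈ A₁, a ∈ m) ∧ f m = x := by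
    intro x
    rw [Finset.mem_add]
    constructor
    · rintro ⟨a, ha, y, hy, rfl⟩
      obtain ⟨M, hMc, hMB, rfl⟩ := mem_kfoldSumset.1 hy
      refine ⟨Sym.mk (a ::ₘ M) (by simp [hMc, hn]), ?_, ⟨a, ha, ?_⟩, ?_⟩
      · rw [Finset.mem_sym_iff]
        intro b hb
        rcases Multiset.mem_cons.1 hb with rfl | hb
        · exact hA₁ ha
        · exact hMB b hb
      · exact Multiset.mem_cons_self a M
      · simp [hf]
    · rintro ⟨m, hm, ⟨a, ha, ham⟩, rfl⟩
      rw [Finset.mem_sym_iff] at hm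
      refine ⟨a, ha, ((m : Multiset (Fin d → ℝ)).erase a).sum, ?_, ?_⟩
      · refine mem_kfoldSumset.2 ⟨(m : Multiset (Fin d → ℝ)).erase a, ?_, ?_, rfl⟩
        · rw [Multiset.card_erase_of_mem (Sym.mem_coe.2 ham), Sym.card_coe, hn]; rfl
        · exact fun b hb => hm b (Multiset.mem_of_mem_erase hb)
      · have hme := Multiset.cons_erase (Sym.mem_coe.2 ham)
        have hfm : f m = (m : Multiset (Fin d → ℝ)).sum := rfl
        rw [hfm]
        conv_rhs => rw [← hme]
        rw [Multiset.sum_cons]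
  -- union decomposition
  have hun : (B.sym n).image f = (A₁ + kfoldSumset k B) ∪ ((B \ A₁).sym n).image f := by
    ext x
    simp only [Finset.mem_image, Finset.mem_union]
    constructor
    · rintro ⟨m, hm, rfl⟩
      by_cases hA : ∃ a ∈ A₁, a ∈ m
      · exact Or.inl ((hchar _).2 ⟨m, hm, hA, rfl⟩)
      · push_neg at hA
        refine Or.inr ⟨m, ?_, rfl⟩
        rw [Finset.mem_sym_iff] at hm ⊢
        intro b hb
        rw [Finset.mem_sdiff]
        refine ⟨hm b hb, fun hbA => hA b hbA hb⟩
    · rintro (hx | ⟨m, hm, rfl⟩)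
      · obtain ⟨m, hm, -, rfl⟩ := (hchar _).1 hx
        exact ⟨m, hm, rfl⟩
      · exact ⟨m, Finset.sym_mono Finset.sdiff_subset n hm, rfl⟩
  have hdisj : Disjoint (A₁ + kfoldSumset k B) (((B \ A₁).sym n).image f) := by
    rw [Finset.disjoint_left]
    rintro x hx hx'
    obtain ⟨m, hm, ⟨a, haA, ham⟩, rfl⟩ := (hchar _).1 hx
    obtain ⟨m', hm', hmm'⟩ := Finset.mem_image.1 hx'
    have hm'B : m' ∈ B.sym n := Finset.sym_mono Finset.sdiff_subset n hm'
    have : m' = m := hinj hm'B hm hmm'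
    subst this
    rw [Finset.mem_sym_iff] at hm'
    exact (Finset.mem_sdiff.1 (hm' a ham)).2 haA
  -- cardinalities
  have hm₁le : m₁ ≤ d + 1 := by
    rw [← hm₁, ← hB]; exact Finset.card_le_card hA₁
  have hc1 : ((B.sym n).image f).card = (d + k + 1).choose (k + 1) := by
    rw [Finset.card_image_of_injOn hinj, card_finset_sym, hB, hn]
    congr 1
    omega
  have hc2 : (((B \ A₁).sym n).image f).card = (d + k + 1 - m₁).choose (k + 1) := by
    have hinj' : Set.InjOn f ((B \ A₁).sym n) :=
      hinj.mono (Finset.coe_subset.2 (Finset.sym_mono Finset.sdiff_subset n))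
    rw [Finset.card_image_of_injOn hinj', card_finset_sym,
      Finset.card_sdiff_of_subset hA₁, hB, hm₁, hn]
    congr 1
    omega
  have hkey : (d + k + 1).choose (k + 1)
      = (A₁ + kfoldSumset k B).card + (d + k + 1 - m₁).choose (k + 1) := by
    rw [← hc1, ← hc2, hun, Finset.card_union_of_disjoint hdisj]
  rw [hkey]
  push_cast
  ring
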